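/- For the PDHG eigenvalues γᵢ^± = 1 − η²σᵢ² ± i·ησᵢ√(1 − η²σᵢ²) with 0 < ησᵢ ≤ 1, one has |1 − γᵢ^±| = ησᵢ, and for every K ∈ ℕ, |1 − (γᵢ^±)^K| ≥ K η²σᵢ²/(2 + K η²σᵢ²). -/

import Mathlib

lemma key_pow_bound (x : ℝ) (hx0 : 0 ≤ x) (hx1 : x ≤ 1) :
    ∀ K : ℕ, x ^ K * (2 + (K : ℝ) * (1 - x ^ 2)) ≤ 2 := by
  intro K
  induction K with
  | zero => simp
  | succ n ih =>
    have hxn : x ^ (n + 1) ≤ x := by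
      calc x ^ (n + 1) ≤ x ^ 1 := pow_le_pow_of_le_one hx0 hx1 (by omega)
        _ = x := pow_one x
    have h2 : x * (x ^ n * (2 + (n : ℝ) * (1 - x ^ 2))) ≤ 2 * x :=
      mul_le_mul_of_nonneg_left ih hx0 |>.trans_eq (by ring) |>.trans_eq rfl
    have h3 : x ^ (n + 1) * (1 - x ^ 2) ≤ x * (1 - x ^ 2) :=
      mul_le_mul_of_nonneg_right hxn (by nlinarith)
    have hexp : x ^ (n + 1) * (2 + ((n : ℝ) + 1) * (1 - x ^ 2)) =
        x * (x ^ n * (2 + (n : ℝ) * (1 - x ^ 2))) + x ^ (n + 1) * (1 - x ^ 2) := by ring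
    have hcube : 2 * x + x * (1 - x ^ 2) ≤ 2 := by
      nlinarith [mul_nonneg (sq_nonneg (1 - x)) (by linarith : (0:ℝ) ≤ x + 2)]
    push_cast
    linarith [hexp ▸ (add_le_add h2 h3)]

lemma abs_from_parts (r b : ℝ) :
    ‖((r : ℝ) : ℂ) + Complex.I * ((b : ℝ) : ℂ)‖ = Real.sqrt (r ^ 2 + b ^ 2) := by
  rw [show ((r : ℝ) : ℂ) + Complex.I * ((b : ℝ) : ℂ) = Complex.mk r b by
    apply Complex.ext <;> simp]
  rw [Complex.norm_def, Complex.normSq_mk]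
  ring_nf

theorem pdhg_eigenvalue_bounds (η σ : ℝ) (hη : 0 < η) (hσ : 0 < σ) (h : η * σ ≤ 1) :
    ∀ γ ∈ ({((1 - η ^ 2 * σ ^ 2 : ℝ) : ℂ) +
              Complex.I * ((η * σ * Real.sqrt (1 - η ^ 2 * σ ^ 2) : ℝ) : ℂ),
            ((1 - η ^ 2 * σ ^ 2 : ℝ) : ℂ) -
              Complex.I * ((η * σ * Real.sqrt (1 - η ^ 2 * σ ^ 2) : ℝ) : ℂ)} : Set ℂ),
      ‖1 - γ‖ = η * σ ∧
        ∀ K : ℕ, (K : ℝ) * η ^ 2 * σ ^ 2 / (2 + (K : ℝ) * η ^ 2 * σ ^ 2) ≤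
          ‖1 - γ ^ K‖ := by
  have ha1 : η ^ 2 * σ ^ 2 ≤ 1 := by nlinarith [mul_pos hη hσ]
  have ha0 : 0 < η ^ 2 * σ ^ 2 := by positivity
  have hs0 : (0:ℝ) ≤ 1 - η ^ 2 * σ ^ 2 := by linarith
  set x := Real.sqrt (1 - η ^ 2 * σ ^ 2) with hxdef
  have hx2 : x ^ 2 = 1 - η ^ 2 * σ ^ 2 := Real.sq_sqrt hs0
  have hx0 : 0 ≤ x := Real.sqrt_nonneg _
  have hx1 : x ≤ 1 := by nlinarith
  -- common part
  have main : ∀ b : ℝ, b ^ 2 = (η * σ * x) ^ 2 →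
      ‖1 - (((1 - η ^ 2 * σ ^ 2 : ℝ) : ℂ) + Complex.I * ((b : ℝ) : ℂ))‖ = η * σ ∧
      ∀ K : ℕ, (K : ℝ) * η ^ 2 * σ ^ 2 / (2 + (K : ℝ) * η ^ 2 * σ ^ 2) ≤
        ‖1 - (((1 - η ^ 2 * σ ^ 2 : ℝ) : ℂ) + Complex.I * ((b : ℝ) : ℂ)) ^ K‖ := by
    intro b hb
    set γ : ℂ := ((1 - η ^ 2 * σ ^ 2 : ℝ) : ℂ) + Complex.I * ((b : ℝ) : ℂ) with hγdef
    have h1γ : 1 - γ = ((η ^ 2 * σ ^ 2 : ℝ) : ℂ) + Complex.I * ((-b : ℝ) : ℂ) := by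
      simp [hγdef]; push_cast; ring
    have habs1 : ‖1 - γ‖ = η * σ := by
      rw [h1γ, abs_from_parts]
      have : (η ^ 2 * σ ^ 2) ^ 2 + (-b) ^ 2 = (η * σ) ^ 2 := by
        have : (-b) ^ 2 = b ^ 2 := by ring
        rw [this, hb]; nlinarith
      rw [this, Real.sqrt_sq (by positivity)]
    have habsγ : ‖γ‖ = x := by
      rw [hγdef, abs_from_parts]
      have : (1 - η ^ 2 * σ ^ 2) ^ 2 + b ^ 2 = x ^ 2 := by rw [hb]; nlinarith
      rw [this, Real.sqrt_sq hx0]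
    refine ⟨habs1, fun K => ?_⟩
    have hlow : 1 - x ^ K ≤ ‖1 - γ ^ K‖ := by
      have := norm_sub_norm_le (1 : ℂ) (γ ^ K)
      simpa [map_pow, habsγ] using this
    have hpos : (0:ℝ) < 2 + (K : ℝ) * η ^ 2 * σ ^ 2 := by positivity
    have hk := key_pow_bound x hx0 hx1 K
    rw [hx2] at hk
    calc (K : ℝ) * η ^ 2 * σ ^ 2 / (2 + (K : ℝ) * η ^ 2 * σ ^ 2)
        ≤ 1 - x ^ K := by
          rw [div_le_iff₀ hpos]; nlinarith
      _ ≤ _ := hlow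
  intro γ hγ
  rcases hγ with hγ | hγ
  · rw [hγ]; exact main (η * σ * x) rfl
  · rw [hγ]
    have := main (-(η * σ * x)) (by ring)
    convert this using 4 <;> push_cast <;> ring
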